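/- Let Σ = {a, b} with the three-letter order a < ♯ < b, where ♯ ∉ Σ. A permutation π ∈ S_{n+1} is the suffix array of a word w♯ with w ∈ {a,b}ⁿ (suffixes compared with respect to the order a < ♯ < b) if and only if π is both ascending-to-max and non-nesting. -/

import Mathlib

/-- Cyclic addition of the constant `k` to all values of a permutation of
`{1, …, n}` (identifying positions/values with `Fin n`, 1-based position `i`
corresponding to `i - 1 : Fin n`): `(addConst π k) i = π i + k (mod n)`. -/
def addConst {n : ℕ} (π : Equiv.Perm (Fin n)) (k : ℕ) : Equiv.Perm (Fin n) :=
  π.trans (finRotate n ^ k)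

/-- The linking permutation `Φ(π) = π⁻¹ ∘ (π + 1)`, i.e.
`Φ(π) i = π⁻¹ (π i + 1)` with cyclic value addition (`n + 1 ≡ 1`). -/
def linkPerm {n : ℕ} (π : Equiv.Perm (Fin n)) : Equiv.Perm (Fin n) :=
  (π.trans (finRotate n)).trans π.symm

/-- A permutation has exactly one orbit: iterating it reaches any element from
any element. -/
def OneOrbit {n : ℕ} (φ : Equiv.Perm (Fin n)) : Prop :=
  ∀ x y : Fin n, ∃ m : ℕ, (φ ^ m) x = y

/-- The descent set of a permutation of `{1, …, n}`, as a set of 1-based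
positions: `i ∈ [1, n-1]` is a descent iff `φ(i) > φ(i+1)`.  The 1-based
position `i` corresponds to the element `i - 1 : Fin n`. -/
def desSet {n : ℕ} (φ : Equiv.Perm (Fin n)) : Set ℕ :=
  {i : ℕ | ∃ h : i < n, 1 ≤ i ∧
    φ ⟨i, h⟩ < φ ⟨i - 1, Nat.lt_of_le_of_lt (Nat.sub_le i 1) h⟩}

/-- `π` is the suffix array of the word `w` of length `n`: `π i` is the
(0-based) starting position of the `i`-th smallest suffix of `w` in the
lexicographic order on lists (a proper prefix precedes its extensions). -/
def IsSuffixArray {α : Type*} [LinearOrder α] {n : ℕ} (w : List α)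
    (π : Equiv.Perm (Fin n)) : Prop :=
  w.length = n ∧ ∀ i j : Fin n, i < j → w.drop (π i : ℕ) < w.drop (π j : ℕ)

/-- `π` is the Burrows–Wheeler array of the word `w` of length `n`: `π i` is
the (0-based) starting position of the `i`-th smallest cyclic shift of `w`. -/
def IsBWArray {α : Type*} [LinearOrder α] {n : ℕ} (w : List α)
    (π : Equiv.Perm (Fin n)) : Prop :=
  w.length = n ∧ ∀ i j : Fin n, i < j → w.rotate (π i : ℕ) < w.rotate (π j : ℕ)

/-- A word is primitive iff it is not a proper power of another word:
`w = v^k` implies `k = 1`. -/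
def Primitive {α : Type*} (w : List α) : Prop :=
  ∀ (v : List α) (k : ℕ), w = (List.replicate k v).flatten → k = 1

/-- From `σ ∈ S_n`, the permutation `π' = (n+1) σ(1) ⋯ σ(n) ∈ S_{n+1}`:
position `1` (element `0 : Fin (n+1)`) is sent to the value `n + 1`
(element `Fin.last n`), and position `i + 1` is sent to the value `σ(i)`. -/
def appendMax {n : ℕ} (σ : Equiv.Perm (Fin n)) : Equiv.Perm (Fin (n + 1)) :=
  ((finSuccEquiv n).trans σ.optionCongr).trans (finSuccEquiv' (Fin.last n)).symm

/-- Binomial coefficient with integer arguments, which is `0` when the lower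
index is negative or exceeds the upper index. -/
def intChoose (m r : ℤ) : ℕ :=
  if 0 ≤ r ∧ r ≤ m then m.toNat.choose r.toNat else 0

/-- `π ∈ S_{n+1}` is ascending-to-max.  Values are 1-based: the value
`i ∈ [1, n-1]` corresponds to `x.castSucc` where `x : Fin n` satisfies
`(x : ℕ) + 1 = i` … i.e. `x = i - 1`; the value `i + 1` corresponds to
`x.succ`, and the value `n + 1` corresponds to `Fin.last n`. -/
def AscendingToMax {n : ℕ} (π : Equiv.Perm (Fin (n + 1))) : Prop :=
  ∀ x : Fin n, (x : ℕ) + 1 < n →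
    (π.symm x.castSucc < π.symm (Fin.last n) →
      π.symm x.succ < π.symm (Fin.last n) →
      π.symm x.castSucc < π.symm x.succ) ∧
    (π.symm (Fin.last n) < π.symm x.castSucc →
      π.symm (Fin.last n) < π.symm x.succ →
      π.symm x.succ < π.symm x.castSucc)

/-- `π ∈ S_{n+1}` is non-nesting.  Values are 1-based: the values `i, j ∈ [1, n]`
correspond to `x.castSucc, y.castSucc` with `x, y : Fin n`, and the values
`i + 1, j + 1` to `x.succ, y.succ`. -/
def NonNesting {n : ℕ} (π : Equiv.Perm (Fin (n + 1))) : Prop :=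
  ∀ x y : Fin n, π.symm x.castSucc < π.symm y.castSucc →
    ((π.symm x.castSucc < π.symm x.succ ∧ π.symm y.castSucc < π.symm y.succ) ∨
      (π.symm x.succ < π.symm x.castSucc ∧ π.symm y.succ < π.symm y.castSucc)) →
    π.symm x.succ < π.symm y.succ

lemma sa_fwd {β : Type*} [LinearOrder β] {a s b : β} (has : a < s) (hsb : s < b) {n : ℕ}
    (π : Equiv.Perm (Fin (n + 1))) (w : List β) (hw : w.length = n)
    (hab : ∀ c ∈ w, c = a ∨ c = b) (hsa : IsSuffixArray (w ++ [s]) π) :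
    AscendingToMax π ∧ NonNesting π := by
  obtain ⟨-, hsorted⟩ := hsa
  set W := w ++ [s] with hW
  have hWlen : W.length = n + 1 := by simp [hW, hw]
  have hdropn : W.drop n = [s] := by
    have := List.drop_left (l₁ := w) (l₂ := [s])
    rwa [hw] at this
  have hdrop : ∀ k (hk : k < n), W.drop k = (w[k]'(hw ▸ hk)) :: W.drop (k + 1) := by
    intro k hk
    rw [List.drop_eq_getElem_cons (by omega : k < W.length)]
    congr 1
    exact List.getElem_append_left (hw ▸ hk)
  -- head-letter lemma
  have head : ∀ m (k : ℕ) (hk : k < n), n - k ≤ m →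
      ((w[k]'(hw ▸ hk)) = a → W.drop k < W.drop (k + 1)) ∧
      ((w[k]'(hw ▸ hk)) = b → W.drop (k + 1) < W.drop k) := by
    intro m
    induction m with
    | zero => intro k hk h; omega
    | succ m ih =>
      intro k hk hle
      rcases Nat.lt_or_ge (k + 1) n with h1 | h1
      · have ihk := ih (k + 1) h1 (by omega)
        have hck1 := hab (w[k+1]'(hw ▸ h1)) (List.getElem_mem _)
        constructor
        · intro hca
          rw [hdrop k hk, hca]
          rcases hck1 with hc | hc
          · conv_rhs => rw [hdrop (k+1) h1, hc]
            nth_rewrite 1 [hdrop (k+1) h1, hc]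
            exact List.lex_cons_iff.mpr (by
              have := ihk.1 hc
              rwa [hdrop (k+1) h1, hc] at this)
          · conv_rhs => rw [hdrop (k+1) h1, hc]
            exact List.Lex.rel (has.trans hsb)
        · intro hcb
          rw [hdrop k hk, hcb]
          rcases hck1 with hc | hc
          · conv_lhs => rw [hdrop (k+1) h1, hc]
            exact List.Lex.rel (has.trans hsb)
          · conv_lhs => rw [hdrop (k+1) h1, hc]
            nth_rewrite 1 [hdrop (k+1) h1, hc]
            exact List.lex_cons_iff.mpr (by
              have := ihk.2 hc
              rwa [hdrop (k+1) h1, hc] at this)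
      · have hk1 : k + 1 = n := by omega
        constructor
        · intro hca
          rw [hdrop k hk, hca, hk1, hdropn]
          exact List.Lex.rel has
        · intro hcb
          rw [hdrop k hk, hcb, hk1, hdropn]
          exact List.Lex.rel hsb
  have head' := fun (k : ℕ) (hk : k < n) => head n k hk (by omega)
  have rankLt' : ∀ p q : Fin (n+1), π.symm p < π.symm q → W.drop (p : ℕ) < W.drop (q : ℕ) := by
    intro p q h
    have := hsorted _ _ h
    simpa using this
  have rankLt : ∀ p q : Fin (n+1), W.drop (p : ℕ) < W.drop (q : ℕ) → π.symm p < π.symm q := by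
    intro p q h
    rcases lt_trichotomy (π.symm p) (π.symm q) with hlt | heq | hgt
    · exact hlt
    · exact absurd h (by rw [π.symm.injective.eq_iff.mp heq]; exact lt_irrefl _)
    · exact absurd h (lt_asymm (rankLt' q p hgt))
  constructor
  · intro x hx
    have hxlt : (x : ℕ) < n := x.2
    have hcx := hab (w[(x : ℕ)]'(hw ▸ hxlt)) (List.getElem_mem _)
    constructor
    · intro h1 _
      have hd1 : W.drop ((x : ℕ)) < W.drop n := by
        simpa using rankLt' _ _ h1
      have hca : w[(x : ℕ)]'(hw ▸ hxlt) = a := by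
        rcases hcx with h | h
        · exact h
        · exfalso
          refine lt_asymm hd1 ?_
          rw [hdropn, hdrop _ hxlt, h]
          exact List.Lex.rel hsb
      have := (head' (x : ℕ) hxlt).1 hca
      apply rankLt
      simpa using this
    · intro h1 _
      have hd1 : W.drop n < W.drop ((x : ℕ)) := by
        simpa using rankLt' _ _ h1
      have hcb : w[(x : ℕ)]'(hw ▸ hxlt) = b := by
        rcases hcx with h | h
        · exfalso
          refine lt_asymm hd1 ?_
          rw [hdropn, hdrop _ hxlt, h]
          exact List.Lex.rel has
        · exact h
      have := (head' (x : ℕ) hxlt).2 hcb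
      apply rankLt
      simpa using this
  · intro x y hxy hcase
    have hx2 : (x : ℕ) < n := x.2
    have hy2 : (y : ℕ) < n := y.2
    have hdxy : W.drop (x : ℕ) < W.drop (y : ℕ) := by simpa using rankLt' _ _ hxy
    have hcx := hab (w[(x : ℕ)]'(hw ▸ hx2)) (List.getElem_mem _)
    have hcy := hab (w[(y : ℕ)]'(hw ▸ hy2)) (List.getElem_mem _)
    rcases hcase with ⟨h1, h2⟩ | ⟨h1, h2⟩
    · have hwa : w[(x : ℕ)]'(hw ▸ hx2) = a := by
        rcases hcx with h | h
        · exact h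
        · exact absurd (by simpa using rankLt' _ _ h1) (lt_asymm (by
            have := (head' (x : ℕ) hx2).2 h
            exact this))
      have hwb : w[(y : ℕ)]'(hw ▸ hy2) = a := by
        rcases hcy with h | h
        · exact h
        · exact absurd (by simpa using rankLt' _ _ h2) (lt_asymm (by
            have := (head' (y : ℕ) hy2).2 h
            exact this))
      have hmain : W.drop ((x : ℕ) + 1) < W.drop ((y : ℕ) + 1) := by
        have := hdxy
        rw [hdrop _ hx2, hdrop _ hy2, hwa, hwb] at this
        exact List.lex_cons_iff.mp this
      apply rankLt
      simpa using hmain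
    · have hwa : w[(x : ℕ)]'(hw ▸ hx2) = b := by
        rcases hcx with h | h
        · exact absurd (by simpa using rankLt' _ _ h1) (lt_asymm (by
            have := (head' (x : ℕ) hx2).1 h
            exact this))
        · exact h
      have hwb : w[(y : ℕ)]'(hw ▸ hy2) = b := by
        rcases hcy with h | h
        · exact absurd (by simpa using rankLt' _ _ h2) (lt_asymm (by
            have := (head' (y : ℕ) hy2).1 h
            exact this))
        · exact h
      have hmain : W.drop ((x : ℕ) + 1) < W.drop ((y : ℕ) + 1) := by
        have := hdxy
        rw [hdrop _ hx2, hdrop _ hy2, hwa, hwb] at this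
        exact List.lex_cons_iff.mp this
      apply rankLt
      simpa using hmain

lemma sa_bwd {β : Type*} [LinearOrder β] {a s b : β} (has : a < s) (hsb : s < b) {n : ℕ}
    (π : Equiv.Perm (Fin (n + 1))) (hA : AscendingToMax π) (hN : NonNesting π) :
    ∃ w : List β, w.length = n ∧ (∀ c ∈ w, c = a ∨ c = b) ∧
      IsSuffixArray (w ++ [s]) π := by
  classical
  set r0 := π.symm (Fin.last n) with hr0
  set w : List β := List.ofFn (fun x : Fin n => if π.symm x.castSucc < r0 then a else b)
    with hwdef
  have hw : w.length = n := by simp [hwdef]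
  refine ⟨w, hw, ?_, ?_⟩
  · intro c hc
    rw [hwdef, List.mem_ofFn] at hc
    obtain ⟨x, rfl⟩ := hc
    by_cases h : π.symm x.castSucc < r0 <;> simp [h]
  set W := w ++ [s] with hW
  have hWlen : W.length = n + 1 := by simp [hW, hw]
  have hdropn : W.drop n = [s] := by
    have := List.drop_left (l₁ := w) (l₂ := [s])
    rwa [hw] at this
  have hdrop : ∀ k (hk : k < n), W.drop k =
      (if π.symm (⟨k, hk⟩ : Fin n).castSucc < r0 then a else b) :: W.drop (k + 1) := by
    intro k hk
    rw [List.drop_eq_getElem_cons (by omega : k < W.length)]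
    congr 1
    rw [List.getElem_append_left (hw ▸ hk)]
    simp [hwdef, List.getElem_ofFn]
  -- ascents and descents
  have hsucclast : ∀ x : Fin n, (x : ℕ) + 1 = n → x.succ = Fin.last n := by
    intro x hx
    exact Fin.ext (by simp [hx])
  have hsuccne : ∀ x : Fin n, (x : ℕ) + 1 < n → π.symm x.succ ≠ r0 := by
    intro x hx h
    have : x.succ = Fin.last n := π.symm.injective h
    have := congrArg Fin.val this
    simp at this
    omega
  have hAsc : ∀ x : Fin n, π.symm x.castSucc < r0 → π.symm x.castSucc < π.symm x.succ := by
    intro x h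
    by_cases hx : (x : ℕ) + 1 < n
    · rcases lt_trichotomy (π.symm x.succ) r0 with h2 | h2 | h2
      · exact (hA x hx).1 h h2
      · exact absurd h2 (hsuccne x hx)
      · exact h.trans h2
    · rw [hsucclast x (by omega : (x : ℕ) + 1 = n)]
      exact h
  have hDesc : ∀ x : Fin n, r0 < π.symm x.castSucc → π.symm x.succ < π.symm x.castSucc := by
    intro x h
    by_cases hx : (x : ℕ) + 1 < n
    · rcases lt_trichotomy (π.symm x.succ) r0 with h2 | h2 | h2
      · exact h2.trans h
      · exact absurd h2 (hsuccne x hx)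
      · exact (hA x hx).2 h h2
    · rw [hsucclast x (by omega : (x : ℕ) + 1 = n)]
      exact h
  -- main sortedness by strong induction on n - π i
  have key : ∀ m, ∀ i j : Fin (n + 1), i < j → n - (π i : ℕ) = m →
      W.drop ((π i : ℕ)) < W.drop ((π j : ℕ)) := by
    intro m
    induction m using Nat.strong_induction_on with
    | _ m ih =>
      intro i j hij hm
      by_cases hp : (π i : ℕ) = n
      · -- i = r0, first suffix is [s]
        have hilast : π i = Fin.last n := Fin.ext (by simpa using hp)
        have hi : i = r0 := by rw [hr0, ← hilast, Equiv.symm_apply_apply]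
        have hq : (π j : ℕ) < n := by
          have hne : π j ≠ π i := fun h => absurd (π.injective h) (ne_of_gt hij)
          have := (π j).2
          rcases Nat.lt_or_ge (π j : ℕ) n with h | h
          · exact h
          · exact absurd (Fin.ext (by omega : ((π j : ℕ)) = ((π i : ℕ)))) hne
        have hyc : (⟨(π j : ℕ), hq⟩ : Fin n).castSucc = π j := Fin.ext (by simp)
        have hjr : r0 < π.symm (⟨(π j : ℕ), hq⟩ : Fin n).castSucc := by
          rw [hyc, Equiv.symm_apply_apply, ← hi]
          exact hij
        rw [hp, hdropn, hdrop _ hq, if_neg (not_lt.mpr hjr.le)]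
        exact List.Lex.rel hsb
      · by_cases hqn : (π j : ℕ) = n
        · -- j = r0
          have hjlast : π j = Fin.last n := Fin.ext (by simpa using hqn)
          have hj : j = r0 := by rw [hr0, ← hjlast, Equiv.symm_apply_apply]
          have hpx : (π i : ℕ) < n := by
            have := (π i).2; omega
          have hxc : (⟨(π i : ℕ), hpx⟩ : Fin n).castSucc = π i := Fin.ext (by simp)
          have hir : π.symm (⟨(π i : ℕ), hpx⟩ : Fin n).castSucc < r0 := by
            rw [hxc, Equiv.symm_apply_apply, ← hj]
            exact hij
          rw [hdrop _ hpx, if_pos hir, hqn, hdropn]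
          exact List.Lex.rel has
        · have hpx : (π i : ℕ) < n := by have := (π i).2; omega
          have hqy : (π j : ℕ) < n := by have := (π j).2; omega
          set x : Fin n := ⟨(π i : ℕ), hpx⟩ with hxdef
          set y : Fin n := ⟨(π j : ℕ), hqy⟩ with hydef
          have hxc : x.castSucc = π i := Fin.ext (by simp [hxdef])
          have hyc : y.castSucc = π j := Fin.ext (by simp [hydef])
          have hxi : π.symm x.castSucc = i := by rw [hxc, Equiv.symm_apply_apply]
          have hyj : π.symm y.castSucc = j := by rw [hyc, Equiv.symm_apply_apply]
          have hir0 : i ≠ r0 := by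
            intro h
            apply hp
            rw [hr0] at h
            have : π i = Fin.last n := by rw [h, Equiv.apply_symm_apply]
            simp [this]
          have hjr0 : j ≠ r0 := by
            intro h
            apply hqn
            rw [hr0] at h
            have : π j = Fin.last n := by rw [h, Equiv.apply_symm_apply]
            simp [this]
          have hrec : (π.symm x.succ < π.symm y.succ) →
              W.drop ((π i : ℕ) + 1) < W.drop ((π j : ℕ) + 1) := by
            intro hsucc
            have hmeas : n - (π (π.symm x.succ) : ℕ) = n - ((π i : ℕ) + 1) := by
              rw [Equiv.apply_symm_apply]
              simp [hxdef]
            have := ih (n - ((π i : ℕ) + 1)) (by omega) (π.symm x.succ) (π.symm y.succ)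
              hsucc hmeas
            rw [Equiv.apply_symm_apply, Equiv.apply_symm_apply] at this
            simpa [hxdef, hydef, Fin.val_succ] using this
          rcases lt_or_gt_of_ne hir0 with hi | hi
          · rcases lt_or_gt_of_ne hjr0 with hj | hj
            · -- both letters a
              have ha1 := hAsc x (by rw [hxi]; exact hi)
              have ha2 := hAsc y (by rw [hyj]; exact hj)
              have hsucc := hN x y (by rw [hxi, hyj]; exact hij) (Or.inl ⟨ha1, ha2⟩)
              rw [hdrop _ hpx, hdrop _ hqy, if_pos (show _ by rw [hxi]; exact hi), if_pos (show _ by rw [hyj]; exact hj)]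
              exact List.lex_cons_iff.mpr (hrec hsucc)
            · -- a vs b
              rw [hdrop _ hpx, hdrop _ hqy, if_pos (show _ by rw [hxi]; exact hi),
                if_neg (not_lt.mpr (le_of_lt (by rw [hyj]; exact hj)))]
              exact List.Lex.rel (has.trans hsb)
          · have hj : r0 < j := hi.trans hij
            -- both letters b
            have ha1 := hDesc x (by rw [hxi]; exact hi)
            have ha2 := hDesc y (by rw [hyj]; exact hj)
            have hsucc := hN x y (by rw [hxi, hyj]; exact hij) (Or.inr ⟨ha1, ha2⟩)
            rw [hdrop _ hpx, hdrop _ hqy, if_neg (not_lt.mpr (le_of_lt (by rw [hxi]; exact hi))),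
              if_neg (not_lt.mpr (le_of_lt (by rw [hyj]; exact hj)))]
            exact List.lex_cons_iff.mpr (hrec hsucc)
  exact ⟨hWlen, fun i j h => key (n - (π i : ℕ)) i j h rfl⟩

/-- (He et al.) Let `Σ = {a, b}` with sentinel order
`a < ♯ < b`.  A permutation `π ∈ S_{n+1}` is the suffix array of a word `w♯`
with `w ∈ {a, b}ⁿ` iff `π` is both ascending-to-max and non-nesting. -/
theorem isSuffixArray_midSentinel_iff_ascendingToMax_nonNesting {β : Type*}
    [LinearOrder β] (a s b : β) (has : a < s) (hsb : s < b) {n : ℕ}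
    (π : Equiv.Perm (Fin (n + 1))) :
    (∃ w : List β, w.length = n ∧ (∀ c ∈ w, c = a ∨ c = b) ∧
        IsSuffixArray (w ++ [s]) π) ↔
      (AscendingToMax π ∧ NonNesting π) := by
  constructor
  · rintro ⟨w, hw, hab, hsa⟩
    exact sa_fwd has hsb π w hw hab hsa
  · rintro ⟨hA, hN⟩
    exact sa_bwd has hsb π hA hN
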